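/- Let C : [0,1] → ℝ² be 1-Lipschitz, let 0 ≤ x₁ ≤ x ≤ x₂ ≤ 1, and let 0 < ε/2 < d. If closest-possible(x₁,x₂) ≥ d − ε/2 and ‖C(x)‖ > d + ε/2, then closest-possible(x₁,x) > d or closest-possible(x,x₂) > d. -/

import Mathlib

open scoped RealInnerProductSpace


noncomputable def closestPossible (C : ℝ → EuclideanSpace ℝ (Fin 2)) (a b : ℝ) : ℝ :=
  sInf ((fun p => ‖p‖) '' {p : EuclideanSpace ℝ (Fin 2) | ‖C a - p‖ + ‖C b - p‖ ≤ b - a})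

/-- Key geometric step: pulling `z` radially in to radius `max (2d'-‖z‖) 0`
moves it closer to (or equally far from) any point `p` of the ball of radius `d'`. -/
lemma pull_in_closer (d' : ℝ) (p z : EuclideanSpace ℝ (Fin 2))
    (hp : ‖p‖ ≤ d') (hz : d' ≤ ‖z‖) (hz0 : 0 < ‖z‖) :
    ‖p - (max (2 * d' - ‖z‖) 0 / ‖z‖) • z‖ ≤ ‖p - z‖ := by
  set t := ‖z‖ with ht
  set l : ℝ := max (2 * d' - t) 0 / t with hl
  have hl0 : 0 ≤ l := div_nonneg (le_max_right _ _) hz0.le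
  have hl1 : l ≤ 1 := by
    rw [hl, div_le_one hz0]
    exact max_le (by linarith) hz0.le
  have hkey : 2 * d' ≤ (1 + l) * t := by
    rcases le_or_gt (2 * d' - t) 0 with h | h
    · have h0 : l = 0 := by rw [hl, max_eq_right h, zero_div]
      rw [h0]; linarith
    · have h0 : l = (2 * d' - t) / t := by rw [hl, max_eq_left h.le]
      rw [h0]
      field_simp
      linarith
  have hip : (inner ℝ p z : ℝ) ≤ d' * t :=
    le_trans (real_inner_le_norm p z) (mul_le_mul hp le_rfl hz0.le (le_trans (norm_nonneg p) hp))
  have hsq : ‖p - l • z‖ ^ 2 ≤ ‖p - z‖ ^ 2 := by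
    rw [norm_sub_sq_real, norm_sub_sq_real, real_inner_smul_right, norm_smul,
      Real.norm_eq_abs, abs_of_nonneg hl0]
    have h1 : 0 ≤ (1 - l) * t * ((1 + l) * t - 2 * d') :=
      mul_nonneg (mul_nonneg (by linarith) hz0.le) (by linarith)
    have h2 : 0 ≤ (1 - l) * (d' * t - (inner ℝ p z : ℝ)) :=
      mul_nonneg (by linarith) (by linarith)
    nlinarith [h1, h2]
  nlinarith [norm_nonneg (p - l • z), norm_nonneg (p - z), hsq]

theorem stmt_6 (C : ℝ → EuclideanSpace ℝ (Fin 2))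
    (hC : ∀ a ∈ Set.Icc (0:ℝ) 1, ∀ b ∈ Set.Icc (0:ℝ) 1, ‖C a - C b‖ ≤ |a - b|)
    (x₁ x x₂ : ℝ) (h0 : 0 ≤ x₁) (h1 : x₁ ≤ x) (h2 : x ≤ x₂) (h3 : x₂ ≤ 1)
    (ε d : ℝ) (hε : 0 < ε / 2) (hεd : ε / 2 < d)
    (hcp : closestPossible C x₁ x₂ ≥ d - ε / 2) (hx : ‖C x‖ > d + ε / 2) :
    closestPossible C x₁ x > d ∨ closestPossible C x x₂ > d := by
  by_contra hcon
  push_neg at hcon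
  obtain ⟨hA, hB⟩ := hcon
  set z : EuclideanSpace ℝ (Fin 2) := C x with hzdef
  set t : ℝ := ‖z‖ with htdef
  have ht : d + ε / 2 < t := hx
  have ht0 : 0 < t := by linarith
  set δ : ℝ := (t - d - ε / 2) / 4 with hδdef
  have hδ : 0 < δ := by rw [hδdef]; linarith
  set d' : ℝ := d + δ with hd'def
  have hd't : d' ≤ t := by rw [hd'def]; rw [hδdef]; linarith
  -- extract a near-optimal point p for (x₁, x)
  have hbdd1 : BddBelow ((fun p => ‖p‖) ''
      {p : EuclideanSpace ℝ (Fin 2) | ‖C x₁ - p‖ + ‖C x - p‖ ≤ x - x₁}) := by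
    refine ⟨0, ?_⟩
    rintro y ⟨w, -, rfl⟩
    exact norm_nonneg w
  have hne1 : ((fun p => ‖p‖) ''
      {p : EuclideanSpace ℝ (Fin 2) | ‖C x₁ - p‖ + ‖C x - p‖ ≤ x - x₁}).Nonempty := by
    refine ⟨‖C x₁‖, C x₁, ?_, rfl⟩
    simp only [Set.mem_setOf_eq, sub_self, norm_zero, zero_add]
    have := hC x ⟨by linarith, by linarith⟩ x₁ ⟨h0, by linarith⟩
    rwa [abs_of_nonneg (by linarith : (0:ℝ) ≤ x - x₁)] at this
  have h1' : closestPossible C x₁ x < d' := lt_of_le_of_lt hA (by rw [hd'def]; linarith)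
  obtain ⟨-, ⟨p, hpmem, rfl⟩, hplt⟩ := (csInf_lt_iff hbdd1 hne1).mp h1'
  -- extract a near-optimal point q for (x, x₂)
  have hbdd2 : BddBelow ((fun p => ‖p‖) ''
      {p : EuclideanSpace ℝ (Fin 2) | ‖C x - p‖ + ‖C x₂ - p‖ ≤ x₂ - x}) := by
    refine ⟨0, ?_⟩
    rintro y ⟨w, -, rfl⟩
    exact norm_nonneg w
  have hne2 : ((fun p => ‖p‖) ''
      {p : EuclideanSpace ℝ (Fin 2) | ‖C x - p‖ + ‖C x₂ - p‖ ≤ x₂ - x}).Nonempty := by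
    refine ⟨‖C x‖, C x, ?_, rfl⟩
    simp only [Set.mem_setOf_eq, sub_self, norm_zero, zero_add]
    have := hC x₂ ⟨by linarith, h3⟩ x ⟨by linarith, by linarith⟩
    rwa [abs_of_nonneg (by linarith : (0:ℝ) ≤ x₂ - x)] at this
  have h2' : closestPossible C x x₂ < d' := lt_of_le_of_lt hB (by rw [hd'def]; linarith)
  obtain ⟨-, ⟨q, hqmem, rfl⟩, hqlt⟩ := (csInf_lt_iff hbdd2 hne2).mp h2'
  simp only [Set.mem_setOf_eq] at hpmem hqmem
  -- the pulled-in point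
  set r : EuclideanSpace ℝ (Fin 2) := (max (2 * d' - t) 0 / t) • z with hrdef
  have hpr : ‖p - r‖ ≤ ‖p - z‖ := pull_in_closer d' p z hplt.le hd't ht0
  have hqr : ‖q - r‖ ≤ ‖q - z‖ := pull_in_closer d' q z hqlt.le hd't ht0
  have hr1 : ‖C x₁ - r‖ ≤ x - x₁ := by
    calc ‖C x₁ - r‖ ≤ ‖C x₁ - p‖ + ‖p - r‖ := norm_sub_le_norm_sub_add_norm_sub _ _ _
      _ ≤ ‖C x₁ - p‖ + ‖p - z‖ := by linarith
      _ = ‖C x₁ - p‖ + ‖C x - p‖ := by rw [norm_sub_rev p z]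
      _ ≤ x - x₁ := hpmem
  have hr2 : ‖C x₂ - r‖ ≤ x₂ - x := by
    calc ‖C x₂ - r‖ ≤ ‖C x₂ - q‖ + ‖q - r‖ := norm_sub_le_norm_sub_add_norm_sub _ _ _
      _ ≤ ‖C x₂ - q‖ + ‖q - z‖ := by linarith
      _ = ‖C x₂ - q‖ + ‖C x - q‖ := by rw [norm_sub_rev q z]
      _ ≤ x₂ - x := by linarith [hqmem]
  have hrmem : ‖r‖ ∈ (fun p => ‖p‖) ''
      {p : EuclideanSpace ℝ (Fin 2) | ‖C x₁ - p‖ + ‖C x₂ - p‖ ≤ x₂ - x₁} := by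
    exact ⟨r, by simp only [Set.mem_setOf_eq]; linarith, rfl⟩
  have hbdd3 : BddBelow ((fun p => ‖p‖) ''
      {p : EuclideanSpace ℝ (Fin 2) | ‖C x₁ - p‖ + ‖C x₂ - p‖ ≤ x₂ - x₁}) := by
    refine ⟨0, ?_⟩
    rintro y ⟨w, -, rfl⟩
    exact norm_nonneg w
  have hle : closestPossible C x₁ x₂ ≤ ‖r‖ := csInf_le hbdd3 hrmem
  have hnr : ‖r‖ = max (2 * d' - t) 0 := by
    rw [hrdef, norm_smul, Real.norm_eq_abs,
      abs_of_nonneg (div_nonneg (le_max_right _ _) ht0.le), ← htdef,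
      div_mul_cancel₀ _ ht0.ne']
  have hrlt : ‖r‖ < d - ε / 2 := by
    rw [hnr]
    apply max_lt
    · rw [hd'def, hδdef]; linarith
    · linarith
  linarith
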